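/- The 7-dimensional two-step nilpotent complex Lie algebra with basis x₁,...,x₇ and brackets [x₁,x₂] = x₅, [x₁,x₃] = x₆, [x₂,x₃] = x₇, [x₃,x₄] = -x₅ admits no periodic derivation (no derivation D with D^m = id for some m ≥ 1). -/

import Mathlib

private lemma norm_one_of_pow (z : ℂ) (m : ℕ) (hm : 1 ≤ m) (h : z ^ m = 1) : ‖z‖ = 1 := by
  have h1 : ‖z‖ ^ m = 1 := by rw [← norm_pow, h, norm_one]
  by_contra hne
  rcases lt_or_gt_of_ne hne with hlt | hgt
  · have := pow_lt_one₀ (norm_nonneg z) hlt (by omega : m ≠ 0)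
    linarith
  · have := one_lt_pow₀ hgt (by omega : m ≠ 0)
    linarith

private lemma mul_conj_one {x : ℂ} (hx : ‖x‖ = 1) : x * (starRingEnd ℂ) x = 1 := by
  have h := Complex.mul_conj x
  rw [Complex.normSq_eq_norm_sq, hx] at h
  simpa using h

private lemma cube_rel {x y : ℂ} (hx : ‖x‖ = 1) (hy : ‖y‖ = 1) (hxy : ‖x + y‖ = 1) :
    x ^ 2 + x * y + y ^ 2 = 0 := by
  have hxx := mul_conj_one hx
  have hyy := mul_conj_one hy
  have hss := mul_conj_one hxy
  rw [map_add] at hss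
  have hxy2 : x * (starRingEnd ℂ) y + y * (starRingEnd ℂ) x = -1 := by
    linear_combination hss - hxx - hyy
  linear_combination (-(y ^ 2)) * hxx + (-(x ^ 2)) * hyy + (x * y) * hxy2

private lemma numeric (l0 l1 p t : ℂ) (h0 : ‖l0‖ = 1) (h1 : ‖l1‖ = 1) (hp : ‖p‖ = 1)
    (ht : ‖t‖ = 1) (h0p : ‖l0 + p‖ = 1) (h1p : ‖l1 + p‖ = 1) (hs : ‖l0 + l1‖ = 1)
    (he : l0 + l1 = p + t) : False := by
  have c0 := cube_rel h0 hp h0p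
  have c1 := cube_rel h1 hp h1p
  by_cases hll : l0 = l1
  · have c2 := cube_rel h0 h1 hs
    have : l0 ^ 2 = 0 := by rw [hll] at c2 ⊢; linear_combination c2 / 3
    have : l0 = 0 := by
      have := pow_eq_zero_iff (n := 2) (by norm_num) |>.mp this
      exact this
    rw [this] at h0; simp at h0
  · have hfac : (l0 - l1) * (l0 + l1 + p) = 0 := by linear_combination c0 - c1
    rcases mul_eq_zero.mp hfac with hz | hz
    · exact hll (by linear_combination hz)
    · have htp : t = -(2 * p) := by linear_combination hz - he
      have hnt : ‖t‖ = 2 := by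
        rw [htp, norm_neg, norm_mul, hp, mul_one]
        simp
      rw [ht] at hnt; norm_num at hnt

private lemma eigvec2 (a b c e lam : ℂ) (h : lam ^ 2 - (a + e) * lam + (a * e - b * c) = 0) :
    ∃ x y : ℂ, (x ≠ 0 ∨ y ≠ 0) ∧ x * a + y * b = lam * x ∧ x * c + y * e = lam * y := by
  by_cases hb : b ≠ 0
  · exact ⟨b, lam - a, Or.inl hb, by ring, by linear_combination -h⟩
  by_cases hc : c ≠ 0
  · exact ⟨lam - e, c, Or.inr hc, by linear_combination -h, by ring⟩
  push_neg at hb hc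
  subst hb; subst hc
  have : (lam - a) * (lam - e) = 0 := by linear_combination h
  rcases mul_eq_zero.mp this with hz | hz
  · exact ⟨1, 0, Or.inl one_ne_zero, by linear_combination -hz, by ring⟩
  · exact ⟨0, 1, Or.inr one_ne_zero, by ring, by linear_combination -hz⟩

private lemma comb2 {M : Type*} [AddCommGroup M] [Module ℂ M]
    (A B C E lam x y : ℂ) (v0 v1 w0 w1 : M)
    (h1 : x * A + y * B = lam * x) (h2 : x * C + y * E = lam * y) :
    x • (A • v0 + C • v1 + w0) + y • (B • v0 + E • v1 + w1) =
      lam • (x • v0 + y • v1) + (x • w0 + y • w1) := by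
  calc x • (A • v0 + C • v1 + w0) + y • (B • v0 + E • v1 + w1)
      = (x * A + y * B) • v0 + (x * C + y * E) • v1 + (x • w0 + y • w1) := by module
    _ = (lam * x) • v0 + (lam * y) • v1 + (x • w0 + y • w1) := by rw [h1, h2]
    _ = lam • (x • v0 + y • v1) + (x • w0 + y • w1) := by module

private lemma eig_pow_general {L : Type*} [AddCommGroup L] [Module ℂ L]
    (f : L →ₗ[ℂ] L) (m : ℕ) (hf : f ^ m = 1)
    (S : Submodule ℂ L) (hS : ∀ z ∈ S, f z ∈ S)
    (v : L) (lam : ℂ) (w0 : L) (hw0 : w0 ∈ S) (hv : f v = lam • v + w0)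
    (φ : L →ₗ[ℂ] ℂ) (hφS : ∀ z ∈ S, φ z = 0) (hφv : φ v ≠ 0) :
    lam ^ m = 1 := by
  have hk : ∀ k : ℕ, ∃ w ∈ S, (f ^ k) v = lam ^ k • v + w := by
    intro k; induction k with
    | zero => exact ⟨0, S.zero_mem, by simp⟩
    | succ k ih =>
      obtain ⟨w, hw, hkw⟩ := ih
      refine ⟨lam ^ k • w0 + f w, S.add_mem (S.smul_mem _ hw0) (hS w hw), ?_⟩
      rw [pow_succ', Module.End.mul_apply, hkw, map_add, map_smul, hv, pow_succ']
      module
  obtain ⟨w, hw, hwm⟩ := hk m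
  rw [hf, Module.End.one_apply] at hwm
  have hc := congrArg φ hwm
  rw [map_add, map_smul, hφS w hw, add_zero, smul_eq_mul] at hc
  have h2 : (lam ^ m - 1) * φ v = 0 := by linear_combination -hc
  rcases mul_eq_zero.mp h2 with hz | hz
  · linear_combination hz
  · exact absurd hz hφv

set_option maxHeartbeats 1000000 in
theorem no_periodic_derivation_dim7 (L : Type*) [LieRing L] [LieAlgebra ℂ L]
    (b : Module.Basis (Fin 7) ℂ L)
    (h01 : ⁅b 0, b 1⁆ = b 4) (h02 : ⁅b 0, b 2⁆ = b 5) (h12 : ⁅b 1, b 2⁆ = b 6)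
    (h23 : ⁅b 2, b 3⁆ = -b 4) (h03 : ⁅b 0, b 3⁆ = 0) (h13 : ⁅b 1, b 3⁆ = 0)
    (hcen : ∀ i j : Fin 7, 4 ≤ j → ⁅b i, b j⁆ = 0) :
    ¬ ∃ D : LieDerivation ℂ L L, ∃ m : ℕ, 1 ≤ m ∧ D.toLinearMap ^ m = 1 := by
  rintro ⟨D, m, hm, hDm⟩
  have hskew : ∀ i j : Fin 7, ⁅b i, b j⁆ = -⁅b j, b i⁆ := fun i j => by rw [← lie_skew]
  have h10 : ⁅b 1, b 0⁆ = -(b 4) := by rw [hskew, h01]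
  have h20 : ⁅b 2, b 0⁆ = -(b 5) := by rw [hskew, h02]
  have h21 : ⁅b 2, b 1⁆ = -(b 6) := by rw [hskew, h12]
  have h30 : ⁅b 3, b 0⁆ = 0 := by rw [hskew, h03, neg_zero]
  have h31 : ⁅b 3, b 1⁆ = 0 := by rw [hskew, h13, neg_zero]
  have h32 : ⁅b 3, b 2⁆ = b 4 := by rw [hskew, h23, neg_neg]
  have hc4 : ∀ i : Fin 7, ⁅b i, b 4⁆ = 0 := fun i => hcen i 4 (by decide)
  have hc5 : ∀ i : Fin 7, ⁅b i, b 5⁆ = 0 := fun i => hcen i 5 (by decide)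
  have hc6 : ∀ i : Fin 7, ⁅b i, b 6⁆ = 0 := fun i => hcen i 6 (by decide)
  have hd4 : ∀ j : Fin 7, ⁅b 4, b j⁆ = 0 := fun j => by
    rw [hskew, hcen j 4 (by decide), neg_zero]
  have hd5 : ∀ j : Fin 7, ⁅b 5, b j⁆ = 0 := fun j => by
    rw [hskew, hcen j 5 (by decide), neg_zero]
  have hd6 : ∀ j : Fin 7, ⁅b 6, b j⁆ = 0 := fun j => by
    rw [hskew, hcen j 6 (by decide), neg_zero]
  have master : ∀ x y : L, ⁅x, y⁆ =
      (b.repr x 0 * b.repr y 1 - b.repr x 1 * b.repr y 0 - b.repr x 2 * b.repr y 3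
        + b.repr x 3 * b.repr y 2) • b 4
      + (b.repr x 0 * b.repr y 2 - b.repr x 2 * b.repr y 0) • b 5
      + (b.repr x 1 * b.repr y 2 - b.repr x 2 * b.repr y 1) • b 6 := by
    intro x y
    have hx := b.sum_repr x
    have hy := b.sum_repr y
    rw [Fin.sum_univ_seven] at hx hy
    conv_lhs => rw [← hx, ← hy]
    simp only [add_lie, smul_lie, lie_add, lie_smul, h01, h02, h03, h12, h13, h23,
      h10, h20, h21, h30, h31, h32, lie_self, hc4, hc5, hc6, hd4, hd5, hd6,
      smul_zero, zero_add, add_zero, smul_neg, smul_smul]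
    module

  -- Leibniz rule instances
  have L01 : D (b 4) = ⁅b 0, D (b 1)⁆ + ⁅D (b 0), b 1⁆ := by
    have h := D.apply_lie_eq_add (b 0) (b 1); rwa [h01] at h
  have L02 : D (b 5) = ⁅b 0, D (b 2)⁆ + ⁅D (b 0), b 2⁆ := by
    have h := D.apply_lie_eq_add (b 0) (b 2); rwa [h02] at h
  have L12 : D (b 6) = ⁅b 1, D (b 2)⁆ + ⁅D (b 1), b 2⁆ := by
    have h := D.apply_lie_eq_add (b 1) (b 2); rwa [h12] at h
  have L03 : (0 : L) = ⁅b 0, D (b 3)⁆ + ⁅D (b 0), b 3⁆ := by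
    have h := D.apply_lie_eq_add (b 0) (b 3); rwa [h03, map_zero] at h
  have L13 : (0 : L) = ⁅b 1, D (b 3)⁆ + ⁅D (b 1), b 3⁆ := by
    have h := D.apply_lie_eq_add (b 1) (b 3); rwa [h13, map_zero] at h
  have L23 : -(D (b 4)) = ⁅b 2, D (b 3)⁆ + ⁅D (b 2), b 3⁆ := by
    have h := D.apply_lie_eq_add (b 2) (b 3); rwa [h23, map_neg] at h
  have e01 : D (b 4) = (b.repr (D (b 0)) 0 + b.repr (D (b 1)) 1) • b 4
      + b.repr (D (b 1)) 2 • b 5 + (-(b.repr (D (b 0)) 2)) • b 6 := by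
    refine L01.trans ?_
    rw [master (b 0) (D (b 1)), master (D (b 0)) (b 1)]
    simp [Module.Basis.repr_self_apply, Finsupp.single_apply]
    all_goals module
  have e02 : D (b 5) = (b.repr (D (b 0)) 3 + b.repr (D (b 2)) 1) • b 4
      + (b.repr (D (b 0)) 0 + b.repr (D (b 2)) 2) • b 5 + b.repr (D (b 0)) 1 • b 6 := by
    refine L02.trans ?_
    rw [master (b 0) (D (b 2)), master (D (b 0)) (b 2)]
    simp [Module.Basis.repr_self_apply, Finsupp.single_apply]
    all_goals module
  have e12 : D (b 6) = (b.repr (D (b 1)) 3 - b.repr (D (b 2)) 0) • b 4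
      + b.repr (D (b 1)) 0 • b 5 + (b.repr (D (b 1)) 1 + b.repr (D (b 2)) 2) • b 6 := by
    refine L12.trans ?_
    rw [master (b 1) (D (b 2)), master (D (b 1)) (b 2)]
    simp [Module.Basis.repr_self_apply, Finsupp.single_apply]
    all_goals module
  have e03 : (0 : L) = (b.repr (D (b 3)) 1 - b.repr (D (b 0)) 2) • b 4
      + b.repr (D (b 3)) 2 • b 5 := by
    refine L03.trans ?_
    rw [master (b 0) (D (b 3)), master (D (b 0)) (b 3)]
    simp [Module.Basis.repr_self_apply, Finsupp.single_apply]
    all_goals module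
  have e13 : (0 : L) = (-(b.repr (D (b 3)) 0) - b.repr (D (b 1)) 2) • b 4
      + b.repr (D (b 3)) 2 • b 6 := by
    refine L13.trans ?_
    rw [master (b 1) (D (b 3)), master (D (b 1)) (b 3)]
    simp [Module.Basis.repr_self_apply, Finsupp.single_apply]
    all_goals module
  have e23 : D (b 4) = (b.repr (D (b 2)) 2 + b.repr (D (b 3)) 3) • b 4
      + b.repr (D (b 3)) 0 • b 5 + b.repr (D (b 3)) 1 • b 6 := by
    refine neg_injective (L23.trans ?_)
    rw [master (b 2) (D (b 3)), master (D (b 2)) (b 3)]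
    simp [Module.Basis.repr_self_apply, Finsupp.single_apply]
    all_goals module
  have coordfun : ∀ {z w : L}, z = w → ∀ k : Fin 7, b.repr z k = b.repr w k :=
    fun h k => by rw [h]
  have ecomb := e01.symm.trans e23
  -- coordinate equations
  have q4 : b.repr (D (b 0)) 0 + b.repr (D (b 1)) 1
      = b.repr (D (b 2)) 2 + b.repr (D (b 3)) 3 := by
    have h := coordfun ecomb 4
    simp [Module.Basis.repr_self_apply, Finsupp.single_apply] at h
    first | linear_combination h | linear_combination -h
  have q5 : b.repr (D (b 1)) 2 = b.repr (D (b 3)) 0 := by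
    have h := coordfun ecomb 5
    simp [Module.Basis.repr_self_apply, Finsupp.single_apply] at h
    first | linear_combination h | linear_combination -h
  have q6 : b.repr (D (b 3)) 1 + b.repr (D (b 0)) 2 = 0 := by
    have h := coordfun ecomb 6
    simp [Module.Basis.repr_self_apply, Finsupp.single_apply] at h
    first | linear_combination h | linear_combination -h
  have s03a : b.repr (D (b 3)) 1 - b.repr (D (b 0)) 2 = 0 := by
    have h := coordfun e03 4
    simp [Module.Basis.repr_self_apply, Finsupp.single_apply] at h
    first | linear_combination h | linear_combination -h
  have hz23 : b.repr (D (b 3)) 2 = 0 := by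
    have h := coordfun e03 5
    simp [Module.Basis.repr_self_apply, Finsupp.single_apply] at h
    first | linear_combination h | linear_combination -h
  have s13a : b.repr (D (b 3)) 0 + b.repr (D (b 1)) 2 = 0 := by
    have h := coordfun e13 4
    simp [Module.Basis.repr_self_apply, Finsupp.single_apply] at h
    first | linear_combination h | linear_combination -h
  have hz21 : b.repr (D (b 1)) 2 = 0 := by linear_combination (q5 + s13a) / 2
  have hz03 : b.repr (D (b 3)) 0 = 0 := by linear_combination s13a - hz21
  have hz13 : b.repr (D (b 3)) 1 = 0 := by linear_combination (s03a + q6) / 2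
  have hz20 : b.repr (D (b 0)) 2 = 0 := by linear_combination q6 - hz13

  -- full expansions of D on basis vectors
  have hb0 : D (b 0) = b.repr (D (b 0)) 0 • b 0 + b.repr (D (b 0)) 1 • b 1 + (b.repr (D (b 0)) 3 • b 3 + b.repr (D (b 0)) 4 • b 4 + b.repr (D (b 0)) 5 • b 5 + b.repr (D (b 0)) 6 • b 6) := by
    have h := b.sum_repr (D (b 0))
    rw [Fin.sum_univ_seven] at h
    conv_lhs => rw [← h]
    rw [hz20]; module
  have hb1 : D (b 1) = b.repr (D (b 1)) 0 • b 0 + b.repr (D (b 1)) 1 • b 1 + (b.repr (D (b 1)) 3 • b 3 + b.repr (D (b 1)) 4 • b 4 + b.repr (D (b 1)) 5 • b 5 + b.repr (D (b 1)) 6 • b 6) := by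
    have h := b.sum_repr (D (b 1))
    rw [Fin.sum_univ_seven] at h
    conv_lhs => rw [← h]
    rw [hz21]; module
  have hb2 : D (b 2) = b.repr (D (b 2)) 2 • b 2 + (b.repr (D (b 2)) 0 • b 0 + b.repr (D (b 2)) 1 • b 1 + b.repr (D (b 2)) 3 • b 3 + b.repr (D (b 2)) 4 • b 4 + b.repr (D (b 2)) 5 • b 5 + b.repr (D (b 2)) 6 • b 6) := by
    have h := b.sum_repr (D (b 2))
    rw [Fin.sum_univ_seven] at h
    conv_lhs => rw [← h]
    module
  have hb3 : D (b 3) = b.repr (D (b 3)) 3 • b 3 + (b.repr (D (b 3)) 4 • b 4 + b.repr (D (b 3)) 5 • b 5 + b.repr (D (b 3)) 6 • b 6) := by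
    have h := b.sum_repr (D (b 3))
    rw [Fin.sum_univ_seven] at h
    conv_lhs => rw [← h]
    rw [hz03, hz13, hz23]; module
  have hb4 : D (b 4) = (b.repr (D (b 0)) 0 + b.repr (D (b 1)) 1) • b 4 := by
    rw [e01, hz21, hz20]; module
  have hb5' : D (b 5) = (b.repr (D (b 0)) 0 + b.repr (D (b 2)) 2) • b 5 + b.repr (D (b 0)) 1 • b 6 + ((b.repr (D (b 0)) 3 + b.repr (D (b 2)) 1) • b 4) := by
    rw [e02]; module
  have hb6' : D (b 6) = b.repr (D (b 1)) 0 • b 5 + (b.repr (D (b 1)) 1 + b.repr (D (b 2)) 2) • b 6 + ((b.repr (D (b 1)) 3 - b.repr (D (b 2)) 0) • b 4) := by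
    rw [e12]; module
  have hcoe : ∀ x : L, D.toLinearMap x = D x := fun _ => rfl
  have vanish : ∀ (k : Fin 7) (sb : Set L), (∀ z ∈ sb, b.repr z k = 0) →
      ∀ z ∈ Submodule.span ℂ sb, b.repr z k = 0 := by
    intro k sb hgen z hz
    have hle : Submodule.span ℂ sb ≤ LinearMap.ker (b.coord k) :=
      Submodule.span_le.mpr fun w hw => by
        simp [LinearMap.mem_ker, Module.Basis.coord_apply, hgen w hw]
    simpa [LinearMap.mem_ker, Module.Basis.coord_apply] using hle hz
  have mW4 : b 4 ∈ Submodule.span ℂ ({b 4, b 5, b 6} : Set L) := Submodule.subset_span (by simp)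
  have mW5 : b 5 ∈ Submodule.span ℂ ({b 4, b 5, b 6} : Set L) := Submodule.subset_span (by simp)
  have mW6 : b 6 ∈ Submodule.span ℂ ({b 4, b 5, b 6} : Set L) := Submodule.subset_span (by simp)
  have mA3 : b 3 ∈ Submodule.span ℂ ({b 3, b 4, b 5, b 6} : Set L) := Submodule.subset_span (by simp)
  have mA4 : b 4 ∈ Submodule.span ℂ ({b 3, b 4, b 5, b 6} : Set L) := Submodule.subset_span (by simp)
  have mA5 : b 5 ∈ Submodule.span ℂ ({b 3, b 4, b 5, b 6} : Set L) := Submodule.subset_span (by simp)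
  have mA6 : b 6 ∈ Submodule.span ℂ ({b 3, b 4, b 5, b 6} : Set L) := Submodule.subset_span (by simp)
  have mB0 : b 0 ∈ Submodule.span ℂ ({b 0, b 1, b 3, b 4, b 5, b 6} : Set L) := Submodule.subset_span (by simp)
  have mB1 : b 1 ∈ Submodule.span ℂ ({b 0, b 1, b 3, b 4, b 5, b 6} : Set L) := Submodule.subset_span (by simp)
  have mB3 : b 3 ∈ Submodule.span ℂ ({b 0, b 1, b 3, b 4, b 5, b 6} : Set L) := Submodule.subset_span (by simp)
  have mB4 : b 4 ∈ Submodule.span ℂ ({b 0, b 1, b 3, b 4, b 5, b 6} : Set L) := Submodule.subset_span (by simp)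
  have mB5 : b 5 ∈ Submodule.span ℂ ({b 0, b 1, b 3, b 4, b 5, b 6} : Set L) := Submodule.subset_span (by simp)
  have mB6 : b 6 ∈ Submodule.span ℂ ({b 0, b 1, b 3, b 4, b 5, b 6} : Set L) := Submodule.subset_span (by simp)
  have mC4 : b 4 ∈ Submodule.span ℂ ({b 4} : Set L) := Submodule.subset_span (by simp)
  have hDW4 : D (b 4) ∈ Submodule.span ℂ ({b 4, b 5, b 6} : Set L) := by rw [hb4]; exact (Submodule.smul_mem _ _ mW4)
  have hDA4 : D (b 4) ∈ Submodule.span ℂ ({b 3, b 4, b 5, b 6} : Set L) := by rw [hb4]; exact (Submodule.smul_mem _ _ mA4)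
  have hDB4 : D (b 4) ∈ Submodule.span ℂ ({b 0, b 1, b 3, b 4, b 5, b 6} : Set L) := by rw [hb4]; exact (Submodule.smul_mem _ _ mB4)
  have hDC4 : D (b 4) ∈ Submodule.span ℂ ({b 4} : Set L) := by rw [hb4]; exact (Submodule.smul_mem _ _ mC4)
  have hDW5 : D (b 5) ∈ Submodule.span ℂ ({b 4, b 5, b 6} : Set L) := by rw [e02]; exact (add_mem (add_mem (Submodule.smul_mem _ _ mW4) (Submodule.smul_mem _ _ mW5)) (Submodule.smul_mem _ _ mW6))
  have hDA5 : D (b 5) ∈ Submodule.span ℂ ({b 3, b 4, b 5, b 6} : Set L) := by rw [e02]; exact (add_mem (add_mem (Submodule.smul_mem _ _ mA4) (Submodule.smul_mem _ _ mA5)) (Submodule.smul_mem _ _ mA6))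
  have hDB5 : D (b 5) ∈ Submodule.span ℂ ({b 0, b 1, b 3, b 4, b 5, b 6} : Set L) := by rw [e02]; exact (add_mem (add_mem (Submodule.smul_mem _ _ mB4) (Submodule.smul_mem _ _ mB5)) (Submodule.smul_mem _ _ mB6))
  have hDW6 : D (b 6) ∈ Submodule.span ℂ ({b 4, b 5, b 6} : Set L) := by rw [e12]; exact (add_mem (add_mem (Submodule.smul_mem _ _ mW4) (Submodule.smul_mem _ _ mW5)) (Submodule.smul_mem _ _ mW6))
  have hDA6 : D (b 6) ∈ Submodule.span ℂ ({b 3, b 4, b 5, b 6} : Set L) := by rw [e12]; exact (add_mem (add_mem (Submodule.smul_mem _ _ mA4) (Submodule.smul_mem _ _ mA5)) (Submodule.smul_mem _ _ mA6))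
  have hDB6 : D (b 6) ∈ Submodule.span ℂ ({b 0, b 1, b 3, b 4, b 5, b 6} : Set L) := by rw [e12]; exact (add_mem (add_mem (Submodule.smul_mem _ _ mB4) (Submodule.smul_mem _ _ mB5)) (Submodule.smul_mem _ _ mB6))
  have hDA3 : D (b 3) ∈ Submodule.span ℂ ({b 3, b 4, b 5, b 6} : Set L) := by rw [hb3]; exact (add_mem (Submodule.smul_mem _ _ mA3) (add_mem (add_mem (Submodule.smul_mem _ _ mA4) (Submodule.smul_mem _ _ mA5)) (Submodule.smul_mem _ _ mA6)))
  have hDB3 : D (b 3) ∈ Submodule.span ℂ ({b 0, b 1, b 3, b 4, b 5, b 6} : Set L) := by rw [hb3]; exact (add_mem (Submodule.smul_mem _ _ mB3) (add_mem (add_mem (Submodule.smul_mem _ _ mB4) (Submodule.smul_mem _ _ mB5)) (Submodule.smul_mem _ _ mB6)))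
  have hDB0 : D (b 0) ∈ Submodule.span ℂ ({b 0, b 1, b 3, b 4, b 5, b 6} : Set L) := by rw [hb0]; exact (add_mem (add_mem (Submodule.smul_mem _ _ mB0) (Submodule.smul_mem _ _ mB1)) (add_mem (add_mem (add_mem (Submodule.smul_mem _ _ mB3) (Submodule.smul_mem _ _ mB4)) (Submodule.smul_mem _ _ mB5)) (Submodule.smul_mem _ _ mB6)))
  have hDB1 : D (b 1) ∈ Submodule.span ℂ ({b 0, b 1, b 3, b 4, b 5, b 6} : Set L) := by rw [hb1]; exact (add_mem (add_mem (Submodule.smul_mem _ _ mB0) (Submodule.smul_mem _ _ mB1)) (add_mem (add_mem (add_mem (Submodule.smul_mem _ _ mB3) (Submodule.smul_mem _ _ mB4)) (Submodule.smul_mem _ _ mB5)) (Submodule.smul_mem _ _ mB6)))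
  have hSW : ∀ z ∈ Submodule.span ℂ ({b 4, b 5, b 6} : Set L), D.toLinearMap z ∈ Submodule.span ℂ ({b 4, b 5, b 6} : Set L) := by
    intro z hz
    induction hz using Submodule.span_induction with
    | mem w hw =>
      simp only [Set.mem_insert_iff, Set.mem_singleton_iff] at hw
      rcases hw with rfl | rfl | rfl
      
      exacts [hDW4, hDW5, hDW6]
    | zero => rw [LinearMap.map_zero]; exact Submodule.zero_mem _
    | add x y _ _ hx hy => rw [LinearMap.map_add]; exact add_mem hx hy
    | smul c x _ hx => rw [LinearMap.map_smul]; exact Submodule.smul_mem _ _ hx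
  have hSA : ∀ z ∈ Submodule.span ℂ ({b 3, b 4, b 5, b 6} : Set L), D.toLinearMap z ∈ Submodule.span ℂ ({b 3, b 4, b 5, b 6} : Set L) := by
    intro z hz
    induction hz using Submodule.span_induction with
    | mem w hw =>
      simp only [Set.mem_insert_iff, Set.mem_singleton_iff] at hw
      rcases hw with rfl | rfl | rfl | rfl
      
      exacts [hDA3, hDA4, hDA5, hDA6]
    | zero => rw [LinearMap.map_zero]; exact Submodule.zero_mem _
    | add x y _ _ hx hy => rw [LinearMap.map_add]; exact add_mem hx hy
    | smul c x _ hx => rw [LinearMap.map_smul]; exact Submodule.smul_mem _ _ hx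
  have hSB : ∀ z ∈ Submodule.span ℂ ({b 0, b 1, b 3, b 4, b 5, b 6} : Set L), D.toLinearMap z ∈ Submodule.span ℂ ({b 0, b 1, b 3, b 4, b 5, b 6} : Set L) := by
    intro z hz
    induction hz using Submodule.span_induction with
    | mem w hw =>
      simp only [Set.mem_insert_iff, Set.mem_singleton_iff] at hw
      rcases hw with rfl | rfl | rfl | rfl | rfl | rfl
      
      exacts [hDB0, hDB1, hDB3, hDB4, hDB5, hDB6]
    | zero => rw [LinearMap.map_zero]; exact Submodule.zero_mem _
    | add x y _ _ hx hy => rw [LinearMap.map_add]; exact add_mem hx hy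
    | smul c x _ hx => rw [LinearMap.map_smul]; exact Submodule.smul_mem _ _ hx
  have hSC : ∀ z ∈ Submodule.span ℂ ({b 4} : Set L), D.toLinearMap z ∈ Submodule.span ℂ ({b 4} : Set L) := by
    intro z hz
    induction hz using Submodule.span_induction with
    | mem w hw =>
      simp only [Set.mem_insert_iff, Set.mem_singleton_iff] at hw
      rcases hw with rfl
      
      exacts [hDC4]
    | zero => rw [LinearMap.map_zero]; exact Submodule.zero_mem _
    | add x y _ _ hx hy => rw [LinearMap.map_add]; exact add_mem hx hy
    | smul c x _ hx => rw [LinearMap.map_smul]; exact Submodule.smul_mem _ _ hx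

  -- eigenvalue power facts
  have htau : (b.repr (D (b 0)) 0 + b.repr (D (b 1)) 1) ^ m = 1 := by
    refine eig_pow_general D.toLinearMap m hDm ⊥ (fun z hz => ?_) (b 4) _ 0
      (Submodule.zero_mem _) ?_ (b.coord 4) (fun z hz => ?_) ?_
    · obtain rfl : z = 0 := by simpa using hz
      rw [LinearMap.map_zero]; exact Submodule.zero_mem _
    · show D (b 4) = (b.repr (D (b 0)) 0 + b.repr (D (b 1)) 1) • b 4 + 0
      rw [add_zero]; exact hb4
    · obtain rfl : z = 0 := by simpa using hz
      simp
    · simp [Module.Basis.coord_apply, Module.Basis.repr_self_apply]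
  have htm : b.repr (D (b 3)) 3 ^ m = 1 := by
    refine eig_pow_general D.toLinearMap m hDm
      (Submodule.span ℂ ({b 4, b 5, b 6} : Set L)) hSW (b 3) (b.repr (D (b 3)) 3)
      (b.repr (D (b 3)) 4 • b 4 + b.repr (D (b 3)) 5 • b 5 + b.repr (D (b 3)) 6 • b 6) ?_ ?_
      (b.coord 3) (fun z hz => ?_) ?_
    · exact (add_mem (add_mem (Submodule.smul_mem _ _ mW4) (Submodule.smul_mem _ _ mW5)) (Submodule.smul_mem _ _ mW6))
    · show D (b 3) = _
      exact hb3
    · rw [Module.Basis.coord_apply]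
      refine vanish 3 _ ?_ z hz
      intro w hw
      simp only [Set.mem_insert_iff, Set.mem_singleton_iff] at hw
      rcases hw with rfl | rfl | rfl <;> simp [Module.Basis.repr_self_apply]
    · simp [Module.Basis.coord_apply, Module.Basis.repr_self_apply]
  have hpm : b.repr (D (b 2)) 2 ^ m = 1 := by
    refine eig_pow_general D.toLinearMap m hDm
      (Submodule.span ℂ ({b 0, b 1, b 3, b 4, b 5, b 6} : Set L)) hSB (b 2) (b.repr (D (b 2)) 2)
      (b.repr (D (b 2)) 0 • b 0 + b.repr (D (b 2)) 1 • b 1 + b.repr (D (b 2)) 3 • b 3 + b.repr (D (b 2)) 4 • b 4 + b.repr (D (b 2)) 5 • b 5 + b.repr (D (b 2)) 6 • b 6) ?_ ?_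
      (b.coord 2) (fun z hz => ?_) ?_
    · exact (add_mem (add_mem (add_mem (add_mem (add_mem (Submodule.smul_mem _ _ mB0) (Submodule.smul_mem _ _ mB1)) (Submodule.smul_mem _ _ mB3)) (Submodule.smul_mem _ _ mB4)) (Submodule.smul_mem _ _ mB5)) (Submodule.smul_mem _ _ mB6))
    · show D (b 2) = _
      exact hb2
    · rw [Module.Basis.coord_apply]
      refine vanish 2 _ ?_ z hz
      intro w hw
      simp only [Set.mem_insert_iff, Set.mem_singleton_iff] at hw
      rcases hw with rfl | rfl | rfl | rfl | rfl | rfl <;> simp [Module.Basis.repr_self_apply]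
    · simp [Module.Basis.coord_apply, Module.Basis.repr_self_apply]
  have key : ∀ lam : ℂ, lam ^ 2 - (b.repr (D (b 0)) 0 + b.repr (D (b 1)) 1) * lam + (b.repr (D (b 0)) 0 * b.repr (D (b 1)) 1 - b.repr (D (b 1)) 0 * b.repr (D (b 0)) 1) = 0 →
      lam ^ m = 1 ∧ (lam + b.repr (D (b 2)) 2) ^ m = 1 := by
    intro lam hlam
    constructor
    · obtain ⟨x, y, hxy, he1, he2⟩ := eigvec2 (b.repr (D (b 0)) 0) (b.repr (D (b 1)) 0) (b.repr (D (b 0)) 1) (b.repr (D (b 1)) 1) lam hlam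
      have hv : D.toLinearMap (x • b 0 + y • b 1) = lam • (x • b 0 + y • b 1) +
          (x • (b.repr (D (b 0)) 3 • b 3 + b.repr (D (b 0)) 4 • b 4 + b.repr (D (b 0)) 5 • b 5 + b.repr (D (b 0)) 6 • b 6) + y • (b.repr (D (b 1)) 3 • b 3 + b.repr (D (b 1)) 4 • b 4 + b.repr (D (b 1)) 5 • b 5 + b.repr (D (b 1)) 6 • b 6)) := by
        show D _ = _
        conv_lhs => rw [map_add, map_smul, map_smul, hb0, hb1]
        exact comb2 _ _ _ _ lam x y (b 0) (b 1) _ _ he1 he2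
      have hwmem : (x • (b.repr (D (b 0)) 3 • b 3 + b.repr (D (b 0)) 4 • b 4 + b.repr (D (b 0)) 5 • b 5 + b.repr (D (b 0)) 6 • b 6) + y • (b.repr (D (b 1)) 3 • b 3 + b.repr (D (b 1)) 4 • b 4 + b.repr (D (b 1)) 5 • b 5 + b.repr (D (b 1)) 6 • b 6)) ∈
          Submodule.span ℂ ({b 3, b 4, b 5, b 6} : Set L) := by
        refine add_mem (Submodule.smul_mem _ _ ?_) (Submodule.smul_mem _ _ ?_)
        · exact (add_mem (add_mem (add_mem (Submodule.smul_mem _ _ mA3) (Submodule.smul_mem _ _ mA4)) (Submodule.smul_mem _ _ mA5)) (Submodule.smul_mem _ _ mA6))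
        · exact (add_mem (add_mem (add_mem (Submodule.smul_mem _ _ mA3) (Submodule.smul_mem _ _ mA4)) (Submodule.smul_mem _ _ mA5)) (Submodule.smul_mem _ _ mA6))
      rcases hxy with hx | hy
      · refine eig_pow_general D.toLinearMap m hDm
          (Submodule.span ℂ ({b 3, b 4, b 5, b 6} : Set L)) hSA (x • b 0 + y • b 1) lam
          (x • (b.repr (D (b 0)) 3 • b 3 + b.repr (D (b 0)) 4 • b 4 + b.repr (D (b 0)) 5 • b 5 + b.repr (D (b 0)) 6 • b 6) + y • (b.repr (D (b 1)) 3 • b 3 + b.repr (D (b 1)) 4 • b 4 + b.repr (D (b 1)) 5 • b 5 + b.repr (D (b 1)) 6 • b 6)) hwmem hv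
          (b.coord 0) (fun z hz => ?_) ?_
        · rw [Module.Basis.coord_apply]
          refine vanish 0 _ ?_ z hz
          intro w hw
          simp only [Set.mem_insert_iff, Set.mem_singleton_iff] at hw
          rcases hw with rfl | rfl | rfl | rfl <;> simp [Module.Basis.repr_self_apply]
        · simpa [Module.Basis.coord_apply, Module.Basis.repr_self_apply, Finsupp.single_apply] using hx
      · refine eig_pow_general D.toLinearMap m hDm
          (Submodule.span ℂ ({b 3, b 4, b 5, b 6} : Set L)) hSA (x • b 0 + y • b 1) lam
          (x • (b.repr (D (b 0)) 3 • b 3 + b.repr (D (b 0)) 4 • b 4 + b.repr (D (b 0)) 5 • b 5 + b.repr (D (b 0)) 6 • b 6) + y • (b.repr (D (b 1)) 3 • b 3 + b.repr (D (b 1)) 4 • b 4 + b.repr (D (b 1)) 5 • b 5 + b.repr (D (b 1)) 6 • b 6)) hwmem hv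
          (b.coord 1) (fun z hz => ?_) ?_
        · rw [Module.Basis.coord_apply]
          refine vanish 1 _ ?_ z hz
          intro w hw
          simp only [Set.mem_insert_iff, Set.mem_singleton_iff] at hw
          rcases hw with rfl | rfl | rfl | rfl <;> simp [Module.Basis.repr_self_apply]
        · simpa [Module.Basis.coord_apply, Module.Basis.repr_self_apply, Finsupp.single_apply] using hy
    · have hlam' : (lam + b.repr (D (b 2)) 2) ^ 2 - ((b.repr (D (b 0)) 0 + b.repr (D (b 2)) 2) + (b.repr (D (b 1)) 1 + b.repr (D (b 2)) 2)) * (lam + b.repr (D (b 2)) 2)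
          + ((b.repr (D (b 0)) 0 + b.repr (D (b 2)) 2) * (b.repr (D (b 1)) 1 + b.repr (D (b 2)) 2) - b.repr (D (b 1)) 0 * b.repr (D (b 0)) 1) = 0 := by linear_combination hlam
      obtain ⟨x, y, hxy, he1, he2⟩ := eigvec2 (b.repr (D (b 0)) 0 + b.repr (D (b 2)) 2) (b.repr (D (b 1)) 0) (b.repr (D (b 0)) 1) (b.repr (D (b 1)) 1 + b.repr (D (b 2)) 2) (lam + b.repr (D (b 2)) 2) hlam'
      have hv : D.toLinearMap (x • b 5 + y • b 6) = (lam + b.repr (D (b 2)) 2) • (x • b 5 + y • b 6) +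
          (x • ((b.repr (D (b 0)) 3 + b.repr (D (b 2)) 1) • b 4) + y • ((b.repr (D (b 1)) 3 - b.repr (D (b 2)) 0) • b 4)) := by
        show D _ = _
        conv_lhs => rw [map_add, map_smul, map_smul, hb5', hb6']
        exact comb2 _ _ _ _ (lam + b.repr (D (b 2)) 2) x y (b 5) (b 6) _ _ he1 he2
      have hwmem : (x • ((b.repr (D (b 0)) 3 + b.repr (D (b 2)) 1) • b 4) + y • ((b.repr (D (b 1)) 3 - b.repr (D (b 2)) 0) • b 4)) ∈ Submodule.span ℂ ({b 4} : Set L) := by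
        exact add_mem (Submodule.smul_mem _ _ (Submodule.smul_mem _ _ mC4)) (Submodule.smul_mem _ _ (Submodule.smul_mem _ _ mC4))
      rcases hxy with hx | hy
      · refine eig_pow_general D.toLinearMap m hDm
          (Submodule.span ℂ ({b 4} : Set L)) hSC (x • b 5 + y • b 6) (lam + b.repr (D (b 2)) 2)
          (x • ((b.repr (D (b 0)) 3 + b.repr (D (b 2)) 1) • b 4) + y • ((b.repr (D (b 1)) 3 - b.repr (D (b 2)) 0) • b 4)) hwmem hv
          (b.coord 5) (fun z hz => ?_) ?_
        · rw [Module.Basis.coord_apply]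
          refine vanish 5 _ ?_ z hz
          intro w hw
          simp only [Set.mem_singleton_iff] at hw
          rcases hw with rfl
          simp [Module.Basis.repr_self_apply]
        · simpa [Module.Basis.coord_apply, Module.Basis.repr_self_apply, Finsupp.single_apply] using hx
      · refine eig_pow_general D.toLinearMap m hDm
          (Submodule.span ℂ ({b 4} : Set L)) hSC (x • b 5 + y • b 6) (lam + b.repr (D (b 2)) 2)
          (x • ((b.repr (D (b 0)) 3 + b.repr (D (b 2)) 1) • b 4) + y • ((b.repr (D (b 1)) 3 - b.repr (D (b 2)) 0) • b 4)) hwmem hv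
          (b.coord 6) (fun z hz => ?_) ?_
        · rw [Module.Basis.coord_apply]
          refine vanish 6 _ ?_ z hz
          intro w hw
          simp only [Set.mem_singleton_iff] at hw
          rcases hw with rfl
          simp [Module.Basis.repr_self_apply]
        · simpa [Module.Basis.coord_apply, Module.Basis.repr_self_apply, Finsupp.single_apply] using hy
  obtain ⟨u, hu⟩ : ∃ u : ℂ, u ^ 2 = (b.repr (D (b 0)) 0 + b.repr (D (b 1)) 1) ^ 2 - 4 * (b.repr (D (b 0)) 0 * b.repr (D (b 1)) 1 - b.repr (D (b 1)) 0 * b.repr (D (b 0)) 1) :=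
    IsAlgClosed.exists_pow_nat_eq _ (by norm_num)
  obtain ⟨hl0m, hl0pm⟩ := key (((b.repr (D (b 0)) 0 + b.repr (D (b 1)) 1) + u) / 2) (by linear_combination hu / 4)
  obtain ⟨hl1m, hl1pm⟩ := key (((b.repr (D (b 0)) 0 + b.repr (D (b 1)) 1) - u) / 2) (by linear_combination hu / 4)
  have hsum : ((b.repr (D (b 0)) 0 + b.repr (D (b 1)) 1) + u) / 2 + ((b.repr (D (b 0)) 0 + b.repr (D (b 1)) 1) - u) / 2 = (b.repr (D (b 0)) 0 + b.repr (D (b 1)) 1) := by ring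
  exact numeric (((b.repr (D (b 0)) 0 + b.repr (D (b 1)) 1) + u) / 2) (((b.repr (D (b 0)) 0 + b.repr (D (b 1)) 1) - u) / 2) (b.repr (D (b 2)) 2) (b.repr (D (b 3)) 3)
    (norm_one_of_pow _ m hm hl0m) (norm_one_of_pow _ m hm hl1m)
    (norm_one_of_pow _ m hm hpm) (norm_one_of_pow _ m hm htm)
    (norm_one_of_pow _ m hm hl0pm) (norm_one_of_pow _ m hm hl1pm)
    (by rw [hsum]; exact norm_one_of_pow _ m hm htau)
    (by rw [hsum]; exact q4)
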